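/- Let n ∈ ℕ, let a : Fin n → ℂ satisfy ∑_j ‖a_j‖² = 1, let E : Fin n → ℝ, let τ ≥ 0, and set √ε = ‖∑_j ‖a_j‖²·exp(−i·E_j·τ)‖. Then for every p ∈ (1,2] and every E_r ∈ ℝ: √ε ≥ 1 − A_{p,0}·(∑_j ‖a_j‖²·|E_j − E_r|^p)·τ^p. -/

import Mathlib

open Real

/-- The set of values `(cos θ - cos x)/(x - θ)^p` for `x ∈ (θ, π)`. -/
noncomputable def Aset (p θ : ℝ) : Set ℝ :=
  (fun x : ℝ => (Real.cos θ - Real.cos x) / (x - θ) ^ p) '' Set.Ioo θ Real.pi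

/-- `A p θ` is the supremum of `(cos θ - cos x)/(x - θ)^p` over `x ∈ (θ, π)`. -/
noncomputable def A (p θ : ℝ) : ℝ := sSup (Aset p θ)

lemma Aset_zero (p : ℝ) : Aset p 0 = (fun x : ℝ => (1 - Real.cos x) / x ^ p) '' Set.Ioo 0 Real.pi := by
  simp [Aset]

lemma Aset_bdd (p : ℝ) (hp : p ∈ Set.Ioc (1:ℝ) 2) : BddAbove (Aset p 0) := by
  refine ⟨2, ?_⟩
  rw [Aset_zero]
  rintro y ⟨x, ⟨hx0, hxπ⟩, rfl⟩
  have hxp : (0:ℝ) < x ^ p := Real.rpow_pos_of_pos hx0 p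
  rw [div_le_iff₀ hxp]
  have h1 : 1 - Real.cos x ≤ x ^ 2 / 2 := by
    have := Real.one_sub_sq_div_two_le_cos (x := x); linarith
  have hxx : x ^ (2:ℕ) = x ^ (2:ℝ) := (Real.rpow_natCast x 2).symm
  have h2 : x ^ (2:ℕ) ≤ 4 * x ^ p := by
    rw [hxx]
    rcases le_or_gt x 1 with h | h
    · have : x ^ (2:ℝ) ≤ x ^ p :=
        Real.rpow_le_rpow_of_exponent_ge hx0 h hp.2
      nlinarith [Real.rpow_pos_of_pos hx0 p]
    · have hx4 : x ≤ 4 := le_trans hxπ.le (by nlinarith [Real.pi_lt_d2])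
      have heq : x ^ (2:ℝ) = x ^ (2 - p) * x ^ p := by
        rw [← Real.rpow_add hx0]; ring_nf
      rw [heq]
      have h2p : x ^ (2 - p) ≤ x ^ (1:ℝ) :=
        Real.rpow_le_rpow_of_exponent_le h.le (by linarith [hp.1])
      rw [Real.rpow_one] at h2p
      exact mul_le_mul_of_nonneg_right (h2p.trans hx4) hxp.le
  linarith

lemma Aset_nonempty (p : ℝ) : (Aset p 0).Nonempty := by
  rw [Aset_zero]
  exact ⟨_, Set.mem_image_of_mem _ ⟨Real.pi_div_two_pos, half_lt_self Real.pi_pos⟩⟩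

lemma le_A {p x : ℝ} (hp : p ∈ Set.Ioc (1:ℝ) 2) (hx : x ∈ Set.Ioo 0 Real.pi) :
    (1 - Real.cos x) / x ^ p ≤ A p 0 := by
  apply le_csSup (Aset_bdd p hp)
  rw [Aset_zero]
  exact Set.mem_image_of_mem _ hx

lemma two_div_le_A {p : ℝ} (hp : p ∈ Set.Ioc (1:ℝ) 2) : 2 / Real.pi ^ p ≤ A p 0 := by
  have hne : Real.pi ∈ closure (Set.Ioo (0:ℝ) Real.pi) := by
    rw [closure_Ioo Real.pi_ne_zero.symm]
    exact Set.right_mem_Icc.mpr Real.pi_pos.le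
  have hnb : (nhdsWithin Real.pi (Set.Ioo 0 Real.pi)).NeBot :=
    mem_closure_iff_nhdsWithin_neBot.mp hne
  have hcont : ContinuousAt (fun x : ℝ => (1 - Real.cos x) / x ^ p) Real.pi := by
    apply ContinuousAt.div
    · exact (continuous_const.sub Real.continuous_cos).continuousAt
    · exact Real.continuousAt_rpow_const _ _ (Or.inl Real.pi_ne_zero)
    · exact ne_of_gt (Real.rpow_pos_of_pos Real.pi_pos p)
  have htend : Filter.Tendsto (fun x : ℝ => (1 - Real.cos x) / x ^ p)
      (nhdsWithin Real.pi (Set.Ioo 0 Real.pi)) (nhds ((1 - Real.cos Real.pi) / Real.pi ^ p)) :=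
    hcont.continuousWithinAt
  have hval : (1 - Real.cos Real.pi) / Real.pi ^ p = 2 / Real.pi ^ p := by
    rw [Real.cos_pi]; ring
  rw [hval] at htend
  refine le_of_tendsto htend ?_
  filter_upwards [self_mem_nhdsWithin] with x hx
  exact le_A hp hx

lemma key_ineq {p : ℝ} (hp : p ∈ Set.Ioc (1:ℝ) 2) (x : ℝ) :
    1 - Real.cos x ≤ A p 0 * |x| ^ p := by
  have hA0 : 0 < A p 0 := by
    have h2 : (0:ℝ) < 2 / Real.pi ^ p :=
      div_pos two_pos (Real.rpow_pos_of_pos Real.pi_pos p)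
    linarith [two_div_le_A hp]
  rcases eq_or_ne x 0 with rfl | hx0
  · simp [Real.zero_rpow (by linarith [hp.1] : p ≠ 0)]
  · have habs : 0 < |x| := abs_pos.mpr hx0
    have hcos : Real.cos |x| = Real.cos x := by
      rcases abs_cases x with ⟨h, _⟩ | ⟨h, _⟩ <;> rw [h] <;> simp [Real.cos_neg]
    rcases lt_or_ge |x| Real.pi with hlt | hge
    · have := le_A hp (x := |x|) ⟨habs, hlt⟩
      rw [div_le_iff₀ (Real.rpow_pos_of_pos habs p)] at this
      rw [hcos] at this
      linarith
    · have h1 : 1 - Real.cos x ≤ 2 := by nlinarith [Real.neg_one_le_cos x]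
      have h2 : Real.pi ^ p ≤ |x| ^ p := Real.rpow_le_rpow Real.pi_pos.le hge
        (by linarith [hp.1])
      have h3 : 2 / Real.pi ^ p * Real.pi ^ p ≤ A p 0 * |x| ^ p := by
        apply mul_le_mul (two_div_le_A hp) h2 (Real.rpow_pos_of_pos Real.pi_pos p).le hA0.le
      rw [div_mul_cancel₀] at h3
      · linarith
      · exact ne_of_gt (Real.rpow_pos_of_pos Real.pi_pos p)

theorem stmt13 (n : ℕ) (a : Fin n → ℂ) (ha : ∑ j, ‖a j‖ ^ 2 = 1)
    (E : Fin n → ℝ) (τ : ℝ) (hτ : 0 ≤ τ)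
    (p Er : ℝ) (hp : p ∈ Set.Ioc (1 : ℝ) 2) :
    1 - A p 0 * (∑ j, ‖a j‖ ^ 2 * |E j - Er| ^ p) * τ ^ p ≤
    ‖∑ j, ((‖a j‖ ^ 2 : ℝ) : ℂ) * Complex.exp (-Complex.I * (E j : ℂ) * (τ : ℂ))‖ := by
  set z : ℂ := ∑ j, ((‖a j‖ ^ 2 : ℝ) : ℂ) * Complex.exp (-Complex.I * (E j : ℂ) * (τ : ℂ))
    with hz
  have hcos_le : ∑ j, ‖a j‖ ^ 2 * Real.cos ((E j - Er) * τ) ≤ ‖z‖ := by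
    have h1 : ‖z‖ = ‖Complex.exp (((Er * τ : ℝ) : ℂ) * Complex.I) * z‖ := by
      rw [norm_mul, Complex.norm_exp_ofReal_mul_I, one_mul]
    have h2 : (Complex.exp (((Er * τ : ℝ) : ℂ) * Complex.I) * z).re
        = ∑ j, ‖a j‖ ^ 2 * Real.cos ((E j - Er) * τ) := by
      rw [hz, Finset.mul_sum, Complex.re_sum]
      refine Finset.sum_congr rfl fun j _ => ?_
      have hmul : Complex.exp (((Er * τ : ℝ) : ℂ) * Complex.I) *
          (((‖a j‖ ^ 2 : ℝ) : ℂ) * Complex.exp (-Complex.I * (E j : ℂ) * (τ : ℂ)))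
          = ((‖a j‖ ^ 2 : ℝ) : ℂ) * Complex.exp ((((Er - E j) * τ : ℝ) : ℂ) * Complex.I) := by
        rw [mul_comm (Complex.exp _), mul_assoc, ← Complex.exp_add]
        congr 2
        push_cast
        ring
      rw [hmul]
      have hre : (((‖a j‖ ^ 2 : ℝ) : ℂ) * Complex.exp ((((Er - E j) * τ : ℝ) : ℂ) * Complex.I)).re
          = ‖a j‖ ^ 2 * Real.cos ((Er - E j) * τ) := by
        rw [Complex.re_ofReal_mul, Complex.exp_ofReal_mul_I_re]
      rw [hre]
      rw [show (Er - E j) * τ = -((E j - Er) * τ) by ring, Real.cos_neg]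
    calc ∑ j, ‖a j‖ ^ 2 * Real.cos ((E j - Er) * τ)
        = (Complex.exp (((Er * τ : ℝ) : ℂ) * Complex.I) * z).re := h2.symm
      _ ≤ ‖Complex.exp (((Er * τ : ℝ) : ℂ) * Complex.I) * z‖ := by
          exact Complex.re_le_norm _
      _ = ‖z‖ := h1.symm
  have hterm : ∀ j, ‖a j‖ ^ 2 - A p 0 * (‖a j‖ ^ 2 * |E j - Er| ^ p * τ ^ p)
      ≤ ‖a j‖ ^ 2 * Real.cos ((E j - Er) * τ) := by
    intro j
    have hk := key_ineq hp ((E j - Er) * τ)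
    have habs : |(E j - Er) * τ| ^ p = |E j - Er| ^ p * τ ^ p := by
      rw [abs_mul, abs_of_nonneg hτ, Real.mul_rpow (abs_nonneg _) hτ]
    rw [habs] at hk
    nlinarith [sq_nonneg ‖a j‖, sq_abs ‖a j‖]
  calc 1 - A p 0 * (∑ j, ‖a j‖ ^ 2 * |E j - Er| ^ p) * τ ^ p
      = ∑ j, (‖a j‖ ^ 2 - A p 0 * (‖a j‖ ^ 2 * |E j - Er| ^ p * τ ^ p)) := by
        rw [Finset.sum_sub_distrib, ha, Finset.mul_sum, Finset.sum_mul]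
        congr 1
        exact Finset.sum_congr rfl fun j _ => by ring
    _ ≤ ∑ j, ‖a j‖ ^ 2 * Real.cos ((E j - Er) * τ) := Finset.sum_le_sum fun j _ => hterm j
    _ ≤ ‖z‖ := hcos_le
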